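/- There exists a finite semifield with exactly 64 elements whose multiplication is not associative, i.e., a proper semifield of order 64. -/
import Mathlib

/-- A finite semifield: a finite nonassociative ring with identity in which
the product of any two nonzero elements is nonzero. -/
structure FiniteSemifield where
  D : Type
  [addGroup : AddCommGroup D]
  mul : D → D → D
  one : D
  finite : Finite D
  mul_add : ∀ a b c : D, mul a (b + c) = mul a b + mul a c
  add_mul : ∀ a b c : D, mul (a + b) c = mul a c + mul b c
  one_mul : ∀ a : D, mul one a = a
  mul_one : ∀ a : D, mul a one = a
  one_ne_zero : one ≠ (0 : D)
  noZeroDiv : ∀ a b : D, mul a b = 0 → a = 0 ∨ b = 0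

attribute [instance] FiniteSemifield.addGroup

/-- GF(8) as triples over GF(2), basis 1, t, t² with t³ = t + 1. -/
abbrev F8 : Type := ZMod 2 × ZMod 2 × ZMod 2

/-- Multiplication in GF(8). -/
def f8mul (a b : F8) : F8 :=
  let c0 := a.1 * b.1
  let c1 := a.1 * b.2.1 + a.2.1 * b.1
  let c2 := a.1 * b.2.2 + a.2.1 * b.2.1 + a.2.2 * b.1
  let c3 := a.2.1 * b.2.2 + a.2.2 * b.2.1
  let c4 := a.2.2 * b.2.2
  (c0 + c3, c1 + c3 + c4, c2 + c4)

def f8sq (a : F8) : F8 := f8mul a a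

/-- The element t of GF(8). -/
def tt : F8 := (0, 1, 0)

/-- The carrier of the semifield: GF(8) × GF(8). -/
abbrev D64 : Type := F8 × F8

/-- Hughes–Kleinfeld type multiplication:
(a,b)∘(c,d) = (ac + b²d, bc + a²d + t b²d). -/
def smul64 (x y : D64) : D64 :=
  (f8mul x.1 y.1 + f8mul (f8sq x.2) y.2,
   f8mul x.2 y.1 + f8mul (f8sq x.1) y.2 + f8mul tt (f8mul (f8sq x.2) y.2))

def sone : D64 := ((1, 0, 0), (0, 0, 0))

lemma f8mul_add (a b c : F8) : f8mul a (b + c) = f8mul a b + f8mul a c := by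
  rcases a with ⟨a0,a1,a2⟩; rcases b with ⟨b0,b1,b2⟩; rcases c with ⟨c0,c1,c2⟩
  simp only [f8mul, Prod.mk_add_mk, Prod.mk.injEq]
  refine ⟨by ring, by ring, by ring⟩

lemma f8add_mul (a b c : F8) : f8mul (a + b) c = f8mul a c + f8mul b c := by
  rcases a with ⟨a0,a1,a2⟩; rcases b with ⟨b0,b1,b2⟩; rcases c with ⟨c0,c1,c2⟩
  simp only [f8mul, Prod.mk_add_mk, Prod.mk.injEq]
  refine ⟨by ring, by ring, by ring⟩

lemma f8sq_add : ∀ a b : F8, f8sq (a + b) = f8sq a + f8sq b := by decide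

set_option maxRecDepth 10000 in
lemma noZeroDiv64 : ∀ a b : D64, smul64 a b = 0 → a = 0 ∨ b = 0 := by
  have key : ∀ a b : D64, (!decide (smul64 a b = 0) || (decide (a = 0) || decide (b = 0))) = true := by
    decide
  intro a b h
  have := key a b
  simp [h] at this
  rcases this with h'|h'
  · exact Or.inl h'
  · exact Or.inr h' 

theorem exists_proper_semifield64 :
    ∃ S : FiniteSemifield, Nat.card S.D = 64 ∧
      ¬ ∀ a b c : S.D, S.mul (S.mul a b) c = S.mul a (S.mul b c) := by
  refine ⟨⟨D64, smul64, sone, inferInstance, ?_, ?_, ?_, ?_, ?_, ?_⟩, ?_, ?_⟩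
  · intro a b c
    simp only [smul64, Prod.fst_add, Prod.snd_add, f8mul_add]
    ext <;> simp [Prod.fst_add, Prod.snd_add] <;> abel
  · intro a b c
    simp only [smul64, Prod.fst_add, Prod.snd_add, f8add_mul, f8sq_add, f8mul_add]
    ext <;> simp [Prod.fst_add, Prod.snd_add] <;> abel
  · exact (by decide : ∀ a : D64, smul64 sone a = a)
  · exact (by decide : ∀ a : D64, smul64 a sone = a)
  · decide
  · exact noZeroDiv64
  · simp [Nat.card_eq_fintype_card]
  · intro h
    have := h ((0,0,0),(1,0,0)) ((0,0,0),(1,0,0)) ((0,0,0),(1,0,0))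
    revert this
    decide
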